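/- Let n ≥ 2, τ > 0, and let f be a continuous function on the closure of ℝⁿ₊. Suppose that for every λ > 0, every x ∈ ∂ℝⁿ₊, and every y ∈ ℝⁿ₊ with |y−x| ≥ λ, one has (λ/|y−x|)^τ f(x + λ²(y−x)/|y−x|²) ≤ f(y). Then f depends only on the last coordinate: f(y', yₙ) = f(0', yₙ) for all (y', yₙ) ∈ ℝⁿ₊. -/

import Mathlib

open Real Filter
open Topology

/-- Partial derivative of `u` in the `i`-th coordinate direction. -/
noncomputable def partialD {n : ℕ} (i : Fin n) (u : EuclideanSpace ℝ (Fin n) → ℝ)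
    (y : EuclideanSpace ℝ (Fin n)) : ℝ :=
  fderiv ℝ u y (EuclideanSpace.single i 1)

/-- The Laplacian of `u`, as a sum of repeated partial derivatives. -/
noncomputable def lapl {n : ℕ} (u : EuclideanSpace ℝ (Fin n) → ℝ)
    (y : EuclideanSpace ℝ (Fin n)) : ℝ :=
  ∑ j, partialD j (fun z => partialD j u z) y

/-- The weighted operator `div(yᵢ^a ∇u) = yᵢ^a Δu + a yᵢ^(a-1) ∂u/∂yᵢ`,
where `i` plays the role of the last coordinate. -/
noncomputable def divA {n : ℕ} (i : Fin n) (a : ℝ) (u : EuclideanSpace ℝ (Fin n) → ℝ)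
    (y : EuclideanSpace ℝ (Fin n)) : ℝ :=
  (y i) ^ a * lapl u y + a * (y i) ^ (a - 1) * partialD i u y

/-- The inversion `y ↦ x + λ²(y-x)/|y-x|²` centered at `x` with radius `λ`. -/
noncomputable def inversion {n : ℕ} (x : EuclideanSpace ℝ (Fin n)) (lam : ℝ)
    (y : EuclideanSpace ℝ (Fin n)) : EuclideanSpace ℝ (Fin n) :=
  x + (lam ^ 2 / ‖y - x‖ ^ 2) • (y - x)

/-- The Kelvin-type transform `u_{x,λ}(y) = (λ/|y-x|)^(n-2+a) u(x + λ²(y-x)/|y-x|²)`. -/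
noncomputable def kelvin {n : ℕ} (a : ℝ) (x : EuclideanSpace ℝ (Fin n)) (lam : ℝ)
    (u : EuclideanSpace ℝ (Fin n) → ℝ) (y : EuclideanSpace ℝ (Fin n)) : ℝ :=
  (lam / ‖y - x‖) ^ ((n : ℝ) - 2 + a) * u (inversion x lam y)

private lemma aux_le {n : ℕ} (τ : ℝ) (hτ : 0 < τ) (i : Fin n)
    (f : EuclideanSpace ℝ (Fin n) → ℝ)
    (hf : ContinuousOn f {y | 0 ≤ y i})
    (h : ∀ lam : ℝ, 0 < lam → ∀ x : EuclideanSpace ℝ (Fin n), x i = 0 →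
      ∀ y : EuclideanSpace ℝ (Fin n), 0 < y i → lam ≤ ‖y - x‖ →
        (lam / ‖y - x‖) ^ τ * f (inversion x lam y) ≤ f y)
    (a b : EuclideanSpace ℝ (Fin n)) (ha : 0 < a i) (hab : a i = b i) :
    f a ≤ f b := by
  rcases eq_or_ne a b with rfl | hne
  · exact le_refl _
  set e : EuclideanSpace ℝ (Fin n) := EuclideanSpace.single i 1 with he
  have hei : e i = 1 := by simp [he, EuclideanSpace.single_apply]
  set d : ℝ := ‖a - b‖ with hd'
  have hd : 0 < d := norm_pos_iff.mpr (sub_ne_zero.mpr hne)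
  have habi : (a - b) i = 0 := by simp [hab]
  -- key inequality for each R > 0
  have key : ∀ R : ℝ, 0 < R →
      ((Real.sqrt (1 + d / R))⁻¹) ^ τ * f a ≤ f (b + ((d * a i) / R) • e) := by
    intro R hR
    set μ : ℝ := 1 + d / R with hμdef
    have hμ1 : 1 < μ := lt_add_of_pos_right 1 (div_pos hd hR)
    have hμ0 : 0 < μ := lt_trans one_pos hμ1
    set x : EuclideanSpace ℝ (Fin n) := a + (R / d) • (a - b) - (a i) • e with hx
    have hxi : x i = 0 := by
      simp [hx, habi, hei]
    have haxi : (a - x) i = a i := by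
      simp [hx, habi, hei]
    have hax0 : a - x ≠ 0 := by
      intro h0
      rw [h0] at haxi
      simp at haxi
      exact ha.ne' haxi.symm
    have hnx : 0 < ‖a - x‖ := norm_pos_iff.mpr hax0
    set lam : ℝ := Real.sqrt μ * ‖a - x‖ with hlamdef
    have hs : 0 < Real.sqrt μ := Real.sqrt_pos.mpr hμ0
    have hlam : 0 < lam := mul_pos hs hnx
    set yR : EuclideanSpace ℝ (Fin n) := b + ((d * a i) / R) • e with hyRdef
    have hyx : yR - x = μ • (a - x) := by
      rw [hyRdef, hx, hμdef]
      match_scalars <;> field_simp <;> ring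
    have hnyx : ‖yR - x‖ = μ * ‖a - x‖ := by
      rw [hyx, norm_smul, Real.norm_eq_abs, abs_of_pos hμ0]
    have hyRi : 0 < yR i := by
      have : yR i = a i + (d * a i) / R := by
        simp [hyRdef, hei, hab]
      rw [this]
      positivity
    have hle : lam ≤ ‖yR - x‖ := by
      rw [hnyx, hlamdef]
      apply mul_le_mul_of_nonneg_right _ hnx.le
      calc Real.sqrt μ ≤ Real.sqrt μ * Real.sqrt μ :=
            le_mul_of_one_le_left hs.le (Real.one_le_sqrt.mpr hμ1.le)
        _ = μ := Real.mul_self_sqrt hμ0.le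
    have hinv : inversion x lam yR = a := by
      rw [inversion, hnyx, hyx, smul_smul]
      have hcoef : lam ^ 2 / (μ * ‖a - x‖) ^ 2 * μ = 1 := by
        rw [hlamdef, mul_pow, mul_pow, Real.sq_sqrt hμ0.le]
        field_simp
      rw [hcoef, one_smul, add_sub_cancel]
    have hrat : lam / ‖yR - x‖ = (Real.sqrt μ)⁻¹ := by
      rw [hnyx, hlamdef]
      rw [show μ = Real.sqrt μ * Real.sqrt μ from (Real.mul_self_sqrt hμ0.le).symm]
      field_simp
      rw [Real.sq_sqrt (sq_nonneg _), Real.sq_sqrt hμ0.le, hμdef]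
    have := h lam hlam x hxi yR hyRi hle
    rw [hinv, hrat] at this
    exact this
  -- limits
  have t0 : Tendsto (fun R : ℝ => d / R) atTop (𝓝 0) :=
    Tendsto.div_atTop tendsto_const_nhds tendsto_id
  have tμ : Tendsto (fun R : ℝ => 1 + d / R) atTop (𝓝 1) := by
    have := (tendsto_const_nhds : Tendsto (fun _ : ℝ => (1:ℝ)) atTop (𝓝 1)).add t0
    simpa using this
  have t1 : Tendsto (fun R : ℝ => ((Real.sqrt (1 + d / R))⁻¹) ^ τ * f a) atTop (𝓝 (f a)) := by
    have h1 : Tendsto (fun R : ℝ => Real.sqrt (1 + d / R)) atTop (𝓝 1) := by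
      have := (Real.continuous_sqrt.tendsto 1).comp tμ
      simpa [Function.comp_def] using this
    have h2 : Tendsto (fun R : ℝ => (Real.sqrt (1 + d / R))⁻¹) atTop (𝓝 1) := by
      have := h1.inv₀ one_ne_zero
      simpa using this
    have h3 := h2.rpow_const (p := τ) (Or.inl one_ne_zero)
    rw [Real.one_rpow] at h3
    have := h3.mul_const (f a)
    simpa using this
  have hb : b ∈ {y : EuclideanSpace ℝ (Fin n) | 0 ≤ y i} := by
    simp only [Set.mem_setOf_eq, ← hab]
    exact ha.le
  have t2 : Tendsto (fun R : ℝ => f (b + ((d * a i) / R) • e)) atTop (𝓝 (f b)) := by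
    have hc : Tendsto (fun R : ℝ => (d * a i) / R) atTop (𝓝 0) :=
      Tendsto.div_atTop tendsto_const_nhds tendsto_id
    have hpt : Tendsto (fun R : ℝ => b + ((d * a i) / R) • e) atTop (𝓝 b) := by
      have := (tendsto_const_nhds : Tendsto (fun _ : ℝ => b) atTop (𝓝 b)).add (hc.smul_const e)
      simpa using this
    have hmem : ∀ᶠ R : ℝ in atTop,
        (b + ((d * a i) / R) • e) ∈ {y : EuclideanSpace ℝ (Fin n) | 0 ≤ y i} := by
      filter_upwards [eventually_gt_atTop (0 : ℝ)] with R hR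
      have : (b + ((d * a i) / R) • e) i = a i + (d * a i) / R := by
        simp [hei, hab]
      simp only [Set.mem_setOf_eq, this]
      positivity
    exact ((hf b hb).tendsto).comp (tendsto_nhdsWithin_iff.mpr ⟨hpt, hmem⟩)
  exact le_of_tendsto_of_tendsto t1 t2
    (by filter_upwards [eventually_gt_atTop (0 : ℝ)] with R hR using key R hR)

/-- **Lemma 3.3 (key calculus lemma for the method of moving spheres).** If
`f ∈ C⁰(closure ℝⁿ₊)`, `τ > 0`, and `(λ/|y-x|)^τ f(x + λ²(y-x)/|y-x|²) ≤ f(y)` for all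
`λ > 0`, `x ∈ ∂ℝⁿ₊` and `y ∈ ℝⁿ₊` with `|y-x| ≥ λ`, then `f` depends only on the last
coordinate: `f(y', yₙ) = f(0', yₙ)`. -/
theorem moving_sphere_calculus (n : ℕ) (hn : 2 ≤ n) (τ : ℝ) (hτ : 0 < τ)
    (i : Fin n) (hi : (i : ℕ) = n - 1)
    (f : EuclideanSpace ℝ (Fin n) → ℝ)
    (hf : ContinuousOn f {y | 0 ≤ y i})
    (h : ∀ lam : ℝ, 0 < lam → ∀ x : EuclideanSpace ℝ (Fin n), x i = 0 →
      ∀ y : EuclideanSpace ℝ (Fin n), 0 < y i → lam ≤ ‖y - x‖ →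
        (lam / ‖y - x‖) ^ τ * f (inversion x lam y) ≤ f y) :
    ∀ y : EuclideanSpace ℝ (Fin n), 0 < y i →
      f y = f ((y i) • EuclideanSpace.single i 1) := by
  intro y hy
  have hb : ((y i) • EuclideanSpace.single i 1 : EuclideanSpace ℝ (Fin n)) i = y i := by
    simp [EuclideanSpace.single_apply]
  refine le_antisymm (aux_le τ hτ i f hf h y _ hy hb.symm) (aux_le τ hτ i f hf h _ y ?_ hb)
  rw [hb]; exact hy
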